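/- arXiv:1804.03597 — 3 statements merged into one kernel-verified Lean document; each statement's English description precedes it below -/
import Mathlib

section
/- The discrete delayed matrix exponential e_m^𝔇 satisfies the delayed difference equation e_m^𝔇(k+1) − e_m^𝔇(k) = D_k · e_m^𝔇(k−m) for all integers k ≥ 0. -/
open Finset Matrix

noncomputable def Pmat {n : ℕ} (D : ℤ → Matrix (Fin n) (Fin n) ℝ) (m : ℤ) :
    ℕ → ℤ → Matrix (Fin n) (Fin n) ℝ
  | 0, _ => 1
  | d + 1, k => ∑ j ∈ Finset.Icc ((d : ℤ) * (m + 1)) (k - 1), D j * Pmat D m d (j - m)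

/-- The discrete delayed matrix exponential `e_m^𝔇(k)`: zero for `k ≤ -m-1`,
the identity for `-m ≤ k ≤ 0`, and `I + ∑_{d=1}^{l} P^𝔇(k,d)` for
`(l-1)(m+1)+1 ≤ k ≤ l(m+1)`, where `l = ⌈k/(m+1)⌉ = (k+m)/(m+1)`. -/
noncomputable def delexp {n : ℕ} (D : ℤ → Matrix (Fin n) (Fin n) ℝ) (m : ℤ) (k : ℤ) :
    Matrix (Fin n) (Fin n) ℝ :=
  if k < -m then 0
  else if k ≤ 0 then 1
  else 1 + ∑ d ∈ Finset.Icc 1 ((k + m) / (m + 1)).toNat, Pmat D m d k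

-- sum over Icc in ℤ, peel top element
lemma int_sum_Icc_top {M : Type*} [AddCommMonoid M] (f : ℤ → M) {a c : ℤ} (h : a ≤ c) :
    ∑ j ∈ Finset.Icc a c, f j = (∑ j ∈ Finset.Icc a (c - 1), f j) + f c := by
  have h1 : Finset.Icc a c = insert c (Finset.Icc a (c - 1)) := by
    ext x; simp only [Finset.mem_Icc, Finset.mem_insert]; omega
  have h2 : c ∉ Finset.Icc a (c - 1) := by simp
  rw [h1, Finset.sum_insert h2, add_comm]

lemma Pmat_zero {n : ℕ} (D : ℤ → Matrix (Fin n) (Fin n) ℝ) (m : ℤ) (d : ℕ) {k : ℤ}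
    (h : k ≤ (d : ℤ) * (m + 1)) : Pmat D m (d + 1) k = 0 := by
  rw [Pmat, Finset.Icc_eq_empty (by omega), Finset.sum_empty]

lemma Pmat_diff {n : ℕ} (D : ℤ → Matrix (Fin n) (Fin n) ℝ) (m : ℤ) (hm : 1 ≤ m)
    (d : ℕ) {k : ℤ} (hk : 0 ≤ k) :
    Pmat D m (d + 1) (k + 1) - Pmat D m (d + 1) k = D k * Pmat D m d (k - m) := by
  by_cases h : (d : ℤ) * (m + 1) ≤ k
  · rw [Pmat, Pmat]
    have : k + 1 - 1 = k := by ring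
    rw [this, int_sum_Icc_top _ h]
    abel
  · push_neg at h
    rw [Pmat_zero D m d (by omega), Pmat_zero D m d (by omega), sub_self]
    match d with
    | 0 => exfalso; simp at h; omega
    | e + 1 =>
      rw [Pmat_zero D m e ?_, mul_zero]
      push_cast at h ⊢
      nlinarith

lemma sum_Icc_one {M : Type*} [AddCommMonoid M] (f : ℕ → M) (N : ℕ) :
    ∑ d ∈ Finset.Icc 1 N, f d = ∑ e ∈ Finset.range N, f (e + 1) := by
  induction N with
  | zero => simp
  | succ N ih =>
    rw [Finset.sum_range_succ, ← ih, ← Finset.insert_Icc_right_eq_Icc_add_one (by omega),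
      Finset.sum_insert (by simp)]
    abel

lemma delexp_eq {n : ℕ} (D : ℤ → Matrix (Fin n) (Fin n) ℝ) (m : ℤ) (hm : 1 ≤ m)
    {k : ℤ} (hk : -m ≤ k) (N : ℕ) (hN : (k + m) / (m + 1) ≤ (N : ℤ)) :
    delexp D m k = 1 + ∑ d ∈ Finset.Icc 1 N, Pmat D m d k := by
  have hL0 : 0 ≤ (k + m) / (m + 1) := Int.ediv_nonneg (by omega) (by omega)
  unfold delexp
  rw [if_neg (by omega)]
  by_cases h0 : k ≤ 0
  · rw [if_pos h0]
    have : ∑ d ∈ Finset.Icc 1 N, Pmat D m d k = 0 := by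
      apply Finset.sum_eq_zero
      intro d hd
      simp only [Finset.mem_Icc] at hd
      obtain ⟨e, rfl⟩ := Nat.exists_eq_succ_of_ne_zero (by omega : d ≠ 0)
      have he : (0:ℤ) ≤ (e : ℤ) * (m + 1) := by positivity
      exact Pmat_zero D m e (by omega)
    rw [this, add_zero]
  · rw [if_neg h0]
    congr 1
    apply Finset.sum_subset
    · apply Finset.Icc_subset_Icc_right; omega
    · intro d hd hd'
      simp only [Finset.mem_Icc] at hd hd'
      have hdL : ((k + m) / (m + 1)) < (d : ℤ) := by omega
      obtain ⟨e, rfl⟩ := Nat.exists_eq_succ_of_ne_zero (by omega : d ≠ 0)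
      apply Pmat_zero
      have h1 : (k + m) / (m + 1) * (m + 1) ≥ k := by
        have h4 := Int.emod_lt_of_pos (k + m) (by omega : (0:ℤ) < m + 1)
        have h5 := Int.mul_ediv_add_emod (k + m) (m + 1)
        rw [mul_comm]; omega
      have h2 : ((k + m) / (m + 1) + 1) ≤ (e : ℤ) + 1 := by push_cast at hdL ⊢; omega
      nlinarith [h1, h2]

theorem delexp_delayed_difference {n : ℕ} (m : ℤ) (hm : 1 ≤ m)
    (D : ℤ → Matrix (Fin n) (Fin n) ℝ) :
    ∀ k : ℤ, 0 ≤ k →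
      delexp D m (k + 1) - delexp D m k = D k * delexp D m (k - m) := by
  intro k hk
  set N := k.toNat with hNdef
  have hkN : (N : ℤ) = k := Int.toNat_of_nonneg hk
  have hm1 : (0:ℤ) < m + 1 := by omega
  have hne : (m + 1 : ℤ) ≠ 0 := by omega
  have hb1 : (k + 1 + m) / (m + 1) ≤ ((N : ℤ) + 1) := by
    have h := Int.ediv_le_ediv hm1 (by nlinarith : k + 1 + m ≤ (k + 1) * (m + 1))
    rw [Int.mul_ediv_cancel _ hne] at h
    omega
  have hb2 : (k + m) / (m + 1) ≤ ((N : ℤ) + 1) := by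
    have h := Int.ediv_le_ediv hm1 (by omega : k + m ≤ k + 1 + m)
    omega
  have hb3 : (k - m + m) / (m + 1) ≤ (N : ℤ) := by
    have h := Int.ediv_le_ediv hm1 (by nlinarith : k - m + m ≤ k * (m + 1))
    rw [Int.mul_ediv_cancel _ hne] at h
    omega
  have h1 := delexp_eq D m hm (by omega : -m ≤ k + 1) (N + 1) (by push_cast; exact hb1)
  have h2 := delexp_eq D m hm (by omega : -m ≤ k) (N + 1) (by push_cast; exact hb2)
  have h3 := delexp_eq D m hm (by omega : -m ≤ k - m) N hb3
  rw [h1, h2, h3, sum_Icc_one (fun d => Pmat D m d (k + 1)), sum_Icc_one (fun d => Pmat D m d k),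
    sum_Icc_one (fun d => Pmat D m d (k - m))]
  have key : ∑ e ∈ Finset.range (N + 1), Pmat D m (e + 1) (k + 1)
      - ∑ e ∈ Finset.range (N + 1), Pmat D m (e + 1) k
      = ∑ e ∈ Finset.range (N + 1), D k * Pmat D m e (k - m) := by
    rw [← Finset.sum_sub_distrib]
    exact Finset.sum_congr rfl fun e _ => Pmat_diff D m hm e hk
  have : (1 + ∑ e ∈ Finset.range (N + 1), Pmat D m (e + 1) (k + 1))
      - (1 + ∑ e ∈ Finset.range (N + 1), Pmat D m (e + 1) k)
      = ∑ e ∈ Finset.range (N + 1), Pmat D m (e + 1) (k + 1)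
      - ∑ e ∈ Finset.range (N + 1), Pmat D m (e + 1) k := by abel
  rw [this, key, Finset.sum_range_succ', show Pmat D m 0 (k - m) = 1 from rfl, mul_one, mul_add, mul_one,
    Finset.mul_sum]
  abel
end

section
/- The matrix function Φ(k) = 0 for k ≤ −m−1, Φ(k) = A^k for −m ≤ k ≤ 0, and Φ(k) = A^k (I + Σ_{d=1}^{l} P^𝔇(k,d)) for (l−1)(m+1)+1 ≤ k ≤ l(m+1), solves the delayed matrix initial value problem Φ(k+1) = A Φ(k) + B_k Φ(k−m) for all k ≥ 0, with Φ(k) = A^k for −m ≤ k ≤ 0. -/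
open Finset Matrix

/-- Integer power `A^k` of an invertible matrix. -/
noncomputable def Az {n : ℕ} {A : Matrix (Fin n) (Fin n) ℝ} (hA : IsUnit A) (k : ℤ) :
    Matrix (Fin n) (Fin n) ℝ :=
  ((hA.unit ^ k : (Matrix (Fin n) (Fin n) ℝ)ˣ) : Matrix (Fin n) (Fin n) ℝ)

lemma int_sum_Icc_succ_top {M : Type*} [AddCommMonoid M] {a b : ℤ} (h : a ≤ b + 1) (f : ℤ → M) :
    ∑ j ∈ Finset.Icc a (b + 1), f j = (∑ j ∈ Finset.Icc a b, f j) + f (b + 1) := by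
  have he : Finset.Icc a (b + 1) = insert (b + 1) (Finset.Icc a b) := by
    ext x; simp only [Finset.mem_Icc, Finset.mem_insert]; omega
  rw [he, Finset.sum_insert (by simp)]
  exact add_comm _ _

lemma Pmat_succ_top {n : ℕ} (D : ℤ → Matrix (Fin n) (Fin n) ℝ) (m : ℤ) (d : ℕ) (k : ℤ)
    (h : (d : ℤ) * (m + 1) ≤ k) :
    Pmat D m (d + 1) (k + 1) = Pmat D m (d + 1) k + D k * Pmat D m d (k - m) := by
  simp only [Pmat]
  rw [show k + 1 - 1 = (k - 1) + 1 by ring, int_sum_Icc_succ_top (by omega), show k - 1 + 1 = k by ring]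

lemma Pmat_vanish {n : ℕ} (D : ℤ → Matrix (Fin n) (Fin n) ℝ) (m : ℤ) (d : ℕ) (k : ℤ)
    (h : k ≤ (d : ℤ) * (m + 1)) :
    Pmat D m (d + 1) k = 0 := by
  simp only [Pmat]
  rw [Finset.Icc_eq_empty (by omega), Finset.sum_empty]

lemma sum_shift {M : Type*} [AddCommMonoid M] (f : ℕ → M) (N : ℕ) :
    ∑ d ∈ Finset.Icc 1 N, f d = ∑ i ∈ Finset.range N, f (i + 1) := by
  induction N with
  | zero => simp
  | succ N ih => rw [Finset.sum_Icc_succ_top (Nat.le_add_left 1 N), ih, Finset.sum_range_succ]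

lemma delexp_rec {n : ℕ} (m : ℤ) (hm : 1 ≤ m) (D : ℤ → Matrix (Fin n) (Fin n) ℝ)
    (k : ℤ) (hk : 0 ≤ k) :
    delexp D m (k + 1) = delexp D m k + D k * delexp D m (k - m) := by
  have hdiv : ∀ (s b : ℤ), 0 ≤ s → s < m + 1 → (s + b * (m + 1)) / (m + 1) = b := by
    intro s b hs hsm
    rw [Int.add_mul_ediv_right _ _ (by omega : (m + 1) ≠ 0),
      Int.ediv_eq_zero_of_lt hs hsm, zero_add]
  set q := k / (m + 1) with hqdef
  set r := k % (m + 1) with hrdef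
  have keq : (m + 1) * q + r = k := Int.mul_ediv_add_emod k (m + 1)
  have hr0 : 0 ≤ r := Int.emod_nonneg k (by omega)
  have hrlt : r < m + 1 := Int.emod_lt_of_pos k (by omega)
  have hq0 : 0 ≤ q := Int.ediv_nonneg hk (by omega)
  set M := q.toNat with hMdef
  have hMq : (M : ℤ) = q := Int.toNat_of_nonneg hq0
  have hqk : q * (m + 1) ≤ k := by linarith [keq]
  -- h1 : delexp at k+1
  have hd1 : (k + 1 + m) / (m + 1) = q + 1 := by
    rw [show k + 1 + m = r + (q + 1) * (m + 1) by linarith [keq]]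
    exact hdiv r (q + 1) hr0 hrlt
  have h1 : delexp D m (k + 1) = 1 + ∑ d ∈ Finset.Icc 1 (M + 1), Pmat D m d (k + 1) := by
    simp only [delexp, if_neg (by omega : ¬ (k + 1 < -m)), if_neg (by omega : ¬ (k + 1 ≤ 0))]
    rw [hd1, show (q + 1).toNat = M + 1 by omega]
  -- h2 : delexp at k
  have h2 : delexp D m k = 1 + ∑ d ∈ Finset.Icc 1 (M + 1), Pmat D m d k := by
    rcases eq_or_lt_of_le hk with h0 | hpos
    · -- k = 0
      have hq' : q = 0 := by rw [hqdef, ← h0, Int.zero_ediv]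
      have hM0 : M = 0 := by omega
      simp only [delexp, if_neg (by omega : ¬ (k < -m)), if_pos (by omega : k ≤ 0)]
      rw [hM0]
      rw [show Finset.Icc 1 (0 + 1) = {1} by rfl, Finset.sum_singleton]
      rw [show (1 : ℕ) = 0 + 1 from rfl, Pmat_vanish D m 0 k (by omega), add_zero]
    · simp only [delexp, if_neg (by omega : ¬ (k < -m)), if_neg (by omega : ¬ (k ≤ 0))]
      rcases eq_or_lt_of_le hr0 with hr | hr
      · -- r = 0 : (k+m)/(m+1) = q, and Pmat (M+1) k = 0
        have hd2 : (k + m) / (m + 1) = q := by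
          rw [show k + m = m + q * (m + 1) by linarith [keq]]
          exact hdiv m q (by omega) (by omega)
        rw [hd2, show q.toNat = M from rfl]
        rw [Finset.sum_Icc_succ_top (Nat.le_add_left 1 M),
          Pmat_vanish D m M k (by rw [hMq]; linarith [keq]), add_zero]
      · have hd2 : (k + m) / (m + 1) = q + 1 := by
          rw [show k + m = (r - 1) + (q + 1) * (m + 1) by linarith [keq]]
          exact hdiv (r - 1) (q + 1) (by omega) (by omega)
        rw [hd2, show (q + 1).toNat = M + 1 by omega]
  -- h3 : delexp at k - m
  have h3 : delexp D m (k - m) = 1 + ∑ d ∈ Finset.Icc 1 M, Pmat D m d (k - m) := by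
    rcases le_or_gt (k - m) 0 with hle | hgt
    · have hq' : q = 0 := by
        rw [hqdef]; exact Int.ediv_eq_zero_of_lt hk (by omega)
      have hM0 : M = 0 := by omega
      simp only [delexp, if_neg (by omega : ¬ (k - m < -m)), if_pos hle]
      rw [hM0, show Finset.Icc 1 0 = ∅ from rfl, Finset.sum_empty, add_zero]
    · simp only [delexp, if_neg (by omega : ¬ (k - m < -m)), if_neg (by omega : ¬ (k - m ≤ 0))]
      rw [show k - m + m = k by ring, ← hqdef, show q.toNat = M from rfl]
  -- h4 : the sum identity
  have hterm : ∀ i ∈ Finset.range (M + 1),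
      Pmat D m (i + 1) (k + 1) = Pmat D m (i + 1) k + D k * Pmat D m i (k - m) := by
    intro i hi
    apply Pmat_succ_top
    have hiM : (i : ℤ) ≤ q := by
      have := Finset.mem_range.mp hi
      omega
    calc (i : ℤ) * (m + 1) ≤ q * (m + 1) := by
          apply mul_le_mul_of_nonneg_right hiM (by omega)
      _ ≤ k := hqk
  have h4 : ∑ d ∈ Finset.Icc 1 (M + 1), Pmat D m d (k + 1)
      = (∑ d ∈ Finset.Icc 1 (M + 1), Pmat D m d k)
        + D k * (1 + ∑ d ∈ Finset.Icc 1 M, Pmat D m d (k - m)) := by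
    rw [sum_shift (fun d => Pmat D m d (k + 1)), sum_shift (fun d => Pmat D m d k),
      sum_shift (fun d => Pmat D m d (k - m))]
    rw [Finset.sum_congr rfl hterm, Finset.sum_add_distrib]
    congr 1
    rw [← Finset.mul_sum, Finset.sum_range_succ' (fun i => Pmat D m i (k - m)) M,
      show Pmat D m 0 (k - m) = 1 from rfl,
      add_comm (∑ i ∈ Finset.range M, Pmat D m (i + 1) (k - m)) 1]
  rw [h1, h2, h3, h4]
  exact (add_assoc _ _ _).symm

theorem Phi_solves_matrix_IVP {n : ℕ} (m : ℤ) (hm : 1 ≤ m)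
    (A : Matrix (Fin n) (Fin n) ℝ) (hA : IsUnit A)
    (B : ℤ → Matrix (Fin n) (Fin n) ℝ)
    (D : ℤ → Matrix (Fin n) (Fin n) ℝ)
    (hD : ∀ k : ℤ, D k = Az hA (-k - 1) * B k * Az hA (k - m))
    (Φ : ℤ → Matrix (Fin n) (Fin n) ℝ)
    (hΦ : ∀ k : ℤ, Φ k = Az hA k * delexp D m k) :
    (∀ k : ℤ, 0 ≤ k → Φ (k + 1) = A * Φ k + B k * Φ (k - m)) ∧
    (∀ k : ℤ, -m ≤ k → k ≤ 0 → Φ k = Az hA k) := by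
  have hAz_add : ∀ a b : ℤ, Az hA (a + b) = Az hA a * Az hA b := by
    intro a b
    simp only [Az]
    rw [_root_.zpow_add, Units.val_mul]
  have hAz0 : Az hA 0 = 1 := by simp [Az]
  have hAz1 : Az hA 1 = A := by simp [Az]
  constructor
  · intro k hk
    have key := delexp_rec m hm D k hk
    have hinv : Az hA (k + 1) * Az hA (-k - 1) = 1 := by
      rw [← hAz_add, show k + 1 + (-k - 1) = 0 by ring, hAz0]
    rw [hΦ (k + 1), key, mul_add, hΦ k, hΦ (k - m), hD k]
    congr 1
    · rw [show k + 1 = 1 + k by ring, hAz_add, hAz1, mul_assoc]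
    · simp only [← mul_assoc]
      rw [hinv, one_mul]
  · intro k h1 h2
    rw [hΦ k]
    have : delexp D m k = 1 := by
      simp only [delexp, if_neg (by omega : ¬ (k < -m)), if_pos h2]
    rw [this, mul_one]
end

section
/- For the constant permutable case (B_k = B, AB = BA, A invertible), the delayed exponential e_m^𝔇(k) for (l−1)(m+1)+1 ≤ k ≤ l(m+1) equals I + Σ_{d=1}^{l} A^{−d} B^d A^{−dm} C(k − (d−1)m, d), recovering the Diblík–Khusainov discrete matrix delayed exponential. -/
open Finset Matrix

lemma Az_comm {n : ℕ} {A B : Matrix (Fin n) (Fin n) ℝ} (hA : IsUnit A)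
    (hAB : A * B = B * A) (j : ℤ) : Commute (Az hA j) B := by
  have h : Commute (↑hA.unit) B := by
    rw [Commute, SemiconjBy, hA.unit_spec]; exact hAB
  exact h.units_zpow_left j

lemma Az_mul {n : ℕ} {A : Matrix (Fin n) (Fin n) ℝ} (hA : IsUnit A) (a b : ℤ) :
    Az hA a * Az hA b = Az hA (a + b) := by
  rw [Az, Az, Az, ← Units.val_mul, ← _root_.zpow_add]

lemma Az_pow {n : ℕ} {A : Matrix (Fin n) (Fin n) ℝ} (hA : IsUnit A) (t : ℤ) (d : ℕ) :
    (Az hA t) ^ d = Az hA (t * d) := by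
  rw [Az, Az, ← Units.val_pow_eq_pow_val, ← zpow_natCast (hA.unit ^ t) d, ← _root_.zpow_mul]

lemma Cpow {n : ℕ} {A B : Matrix (Fin n) (Fin n) ℝ} (hA : IsUnit A)
    (hAB : A * B = B * A) (m : ℤ) (d : ℕ) :
    (Az hA (-(m + 1)) * B) ^ d = Az hA (-(d : ℤ)) * B ^ d * Az hA (-((d : ℤ) * m)) := by
  rw [(Az_comm hA hAB (-(m + 1))).mul_pow, Az_pow]
  have h : Commute (Az hA (-((d : ℤ) * m))) (B ^ d) :=
    (Az_comm hA hAB (-((d : ℤ) * m))).pow_right d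
  rw [mul_assoc, ← h.eq, ← mul_assoc, Az_mul]
  ring_nf

lemma sum_choose_int (m : ℤ) (d : ℕ) (k : ℤ) :
    ∑ j ∈ Finset.Icc ((d : ℤ) * (m + 1)) (k - 1), ((j - (d : ℤ) * m).toNat.choose d : ℝ)
      = ((k - (d : ℤ) * m).toNat.choose (d + 1) : ℝ) := by
  have hexp : (d : ℤ) * (m + 1) = d * m + d := by ring
  have main : ∀ k : ℤ, (d : ℤ) * (m + 1) ≤ k →
      ∑ j ∈ Finset.Icc ((d : ℤ) * (m + 1)) (k - 1), ((j - (d : ℤ) * m).toNat.choose d : ℝ)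
        = ((k - (d : ℤ) * m).toNat.choose (d + 1) : ℝ) := by
    refine Int.le_induction ?_ ?_
    ·
      have he : Finset.Icc ((d : ℤ) * (m + 1)) ((d : ℤ) * (m + 1) - 1) = ∅ := by
        apply Finset.Icc_eq_empty; omega
      rw [he, Finset.sum_empty]
      have h1 : ((d : ℤ) * (m + 1) - (d : ℤ) * m).toNat = d := by omega
      rw [h1, Nat.choose_eq_zero_of_lt (by omega)]
      norm_num
    · intro k hk ih
      have hins : Finset.Icc ((d : ℤ) * (m + 1)) (k + 1 - 1)
          = insert k (Finset.Icc ((d : ℤ) * (m + 1)) (k - 1)) := by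
        ext j; simp [Finset.mem_Icc]; omega
      rw [hins, Finset.sum_insert (by simp [Finset.mem_Icc]), ih]
      have h1 : (k + 1 - (d : ℤ) * m).toNat = (k - (d : ℤ) * m).toNat + 1 := by omega
      rw [h1, Nat.choose_succ_succ]
      push_cast
      ring
  rcases le_or_gt ((d : ℤ) * (m + 1)) k with h | h
  · exact main k h
  · have he : Finset.Icc ((d : ℤ) * (m + 1)) (k - 1) = ∅ := by
      apply Finset.Icc_eq_empty; omega
    rw [he, Finset.sum_empty, Nat.choose_eq_zero_of_lt (by omega)]
    norm_num

lemma Pmat_eq {n : ℕ} (m : ℤ) (A B : Matrix (Fin n) (Fin n) ℝ) (hA : IsUnit A)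
    (hAB : A * B = B * A) (D : ℤ → Matrix (Fin n) (Fin n) ℝ)
    (hD : ∀ k : ℤ, D k = Az hA (-1) * B * Az hA (-m)) (d : ℕ) (k : ℤ) :
    Pmat D m d k = ((k - ((d : ℤ) - 1) * m).toNat.choose d : ℝ) •
      (Az hA (-(m + 1)) * B) ^ d := by
  induction d generalizing k with
  | zero => simp [Pmat]
  | succ d ih =>
    have hDval : ∀ j : ℤ, D j = Az hA (-(m + 1)) * B := by
      intro j
      rw [hD j, mul_assoc, ← (Az_comm hA hAB (-m)).eq, ← mul_assoc, Az_mul]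
      ring_nf
    rw [Pmat]
    have : ∀ j ∈ Finset.Icc ((d : ℤ) * (m + 1)) (k - 1),
        D j * Pmat D m d (j - m)
          = ((j - (d : ℤ) * m).toNat.choose d : ℝ) • (Az hA (-(m + 1)) * B) ^ (d + 1) := by
      intro j _
      rw [hDval j, ih (j - m), mul_smul_comm, ← pow_succ']
      congr 3
      ring_nf
    rw [Finset.sum_congr rfl this, ← Finset.sum_smul, sum_choose_int m d k]
    congr 2
    push_cast
    ring_nf

theorem delexp_permutable_eq_Diblik_Khusainov {n : ℕ} (m : ℤ) (hm : 1 ≤ m)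
    (A B : Matrix (Fin n) (Fin n) ℝ) (hA : IsUnit A) (hAB : A * B = B * A)
    (D : ℤ → Matrix (Fin n) (Fin n) ℝ)
    (hD : ∀ k : ℤ, D k = Az hA (-1) * B * Az hA (-m))
    (l : ℤ) (hl : 1 ≤ l)
    (k : ℤ) (hk1 : (l - 1) * (m + 1) + 1 ≤ k) (hk2 : k ≤ l * (m + 1)) :
    delexp D m k = 1 + ∑ d ∈ Finset.Icc 1 l.toNat,
      ((k - ((d : ℤ) - 1) * m).toNat.choose d : ℝ) •
        (Az hA (-(d : ℤ)) * B ^ d * Az hA (-((d : ℤ) * m))) := by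
  have hmpos : (0 : ℤ) < m + 1 := by omega
  have hkpos : 0 < k := by nlinarith
  have hdiv : (k + m) / (m + 1) = l := by
    apply le_antisymm
    · have := (Int.ediv_lt_iff_lt_mul (a := k + m) (b := l + 1) hmpos).2 (by nlinarith)
      omega
    · exact (Int.le_ediv_iff_mul_le hmpos).2 (by nlinarith)
  rw [delexp, if_neg (by omega), if_neg (by omega), hdiv]
  congr 1
  apply Finset.sum_congr rfl
  intro d _
  rw [Pmat_eq m A B hA hAB D hD d k, Cpow hA hAB m d]
end
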